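/- Let ξ be a real random variable and s, β' > 0 constants such that P(ξ²/s² > t) ≤ K' e^{−t/β'} for all t > 0. Then for every integer n ≥ 2, E[ξ²·1{ξ² > s²β' log n}] ≤ K'β's²(1 + log n)/n. -/

import Mathlib

open MeasureTheory Set Real

theorem stmt_10 {Ω : Type*} [MeasurableSpace Ω] (P : Measure Ω) [IsProbabilityMeasure P]
    (ξ : Ω → ℝ) (hξmeas : Measurable ξ)
    (s β' K' : ℝ) (hs : 0 < s) (hβ' : 0 < β') (hK' : 0 < K')
    (htail : ∀ t : ℝ, 0 < t → (P {ω | (ξ ω) ^ 2 / s ^ 2 > t}).toReal ≤ K' * Real.exp (-t / β'))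
    (n : ℕ) (hn : 2 ≤ n)
    (hint : Integrable (fun ω => (ξ ω) ^ 2 *
      (if (ξ ω) ^ 2 > s ^ 2 * β' * Real.log n then (1:ℝ) else 0)) P) :
    ∫ ω, (ξ ω) ^ 2 * (if (ξ ω) ^ 2 > s ^ 2 * β' * Real.log n then (1:ℝ) else 0) ∂P
      ≤ K' * β' * s ^ 2 * (1 + Real.log n) / n := by
  have hc0 : (0:ℝ) < s ^ 2 * β' := by positivity
  set c : ℝ := s ^ 2 * β' with hc
  have hlogn : 0 < Real.log n := Real.log_pos (by exact_mod_cast hn.trans_lt' one_lt_two)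
  have hn0 : (0:ℝ) < n := by positivity
  set a : ℝ := c * Real.log n with ha
  have ha0 : 0 < a := mul_pos hc0 hlogn
  set f : Ω → ℝ := fun ω => (ξ ω) ^ 2 * (if (ξ ω) ^ 2 > a then (1:ℝ) else 0) with hf
  have hfnn : ∀ ω, 0 ≤ f ω := by
    intro ω; dsimp [f]; positivity
  -- tail bound for X = ξ²
  have hX : ∀ u : ℝ, 0 < u → (P {ω | u < (ξ ω) ^ 2}).toReal ≤ K' * Real.exp (-u / c) := by
    intro u hu
    have hs2 : (0:ℝ) < s ^ 2 := by positivity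
    have hset : {ω | (ξ ω) ^ 2 / s ^ 2 > u / s ^ 2} = {ω | u < (ξ ω) ^ 2} := by
      ext ω; simp only [Set.mem_setOf_eq, gt_iff_lt, div_lt_div_iff_of_pos_right hs2]
    have := htail (u / s ^ 2) (by positivity)
    rw [hset] at this
    simpa [neg_div, div_div, hc] using this
  -- identification of superlevel sets
  have hset1 : ∀ t : ℝ, 0 < t → t ≤ a → {ω | t < f ω} = {ω | a < (ξ ω) ^ 2} := by
    intro t ht hta; ext ω
    simp only [Set.mem_setOf_eq, hf]
    by_cases h : a < (ξ ω) ^ 2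
    · simp [h, lt_of_le_of_lt hta h]
    · simp [h, not_lt_of_gt ht, h]
  have hset2 : ∀ t : ℝ, a < t → {ω | t < f ω} = {ω | t < (ξ ω) ^ 2} := by
    intro t hta; ext ω
    simp only [Set.mem_setOf_eq, hf]
    by_cases h : a < (ξ ω) ^ 2
    · simp [h]
    · have : ¬ t < (ξ ω) ^ 2 := fun hh => h (hta.trans hh)
      simp [h, this, not_lt_of_gt (ha0.trans hta)]
  set g : ℝ → ℝ := fun t => (P {ω | t < f ω}).toReal with hg
  set h : ℝ → ℝ := fun t => K' * Real.exp (-(max t a) / c) with hh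
  have hgh : ∀ t ∈ Ioi (0:ℝ), g t ≤ h t := by
    intro t ht
    simp only [mem_Ioi] at ht
    by_cases hta : t ≤ a
    · have : g t = (P {ω | a < (ξ ω) ^ 2}).toReal := by rw [hg]; simp [hset1 t ht hta]
      rw [this, hh]
      simpa [max_eq_right hta] using hX a ha0
    · push_neg at hta
      have : g t = (P {ω | t < (ξ ω) ^ 2}).toReal := by rw [hg]; simp [hset2 t hta]
      rw [this, hh]
      simpa [max_eq_left hta.le] using hX t (ha0.trans hta)
  have hgnn : ∀ t, 0 ≤ g t := fun t => ENNReal.toReal_nonneg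
  have hgant : Antitone g := by
    intro u v huv
    exact ENNReal.toReal_mono (measure_ne_top _ _)
      (measure_mono fun ω hω => lt_of_le_of_lt huv hω)
  -- integrability of h on Ioi 0
  have hexp_int : IntegrableOn (fun t : ℝ => Real.exp (-c⁻¹ * t)) (Ioi 0) :=
    exp_neg_integrableOn_Ioi 0 (by positivity)
  have hbound : ∀ t : ℝ, 0 < t → h t ≤ K' * Real.exp (-c⁻¹ * t) := by
    intro t ht
    rw [hh]
    have : -(max t a) / c ≤ -c⁻¹ * t := by
      rw [neg_div, neg_mul, neg_le_neg_iff, inv_mul_eq_div]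
      exact div_le_div_of_nonneg_right (le_max_left t a) hc0.le
    exact mul_le_mul_of_nonneg_left (Real.exp_le_exp.2 this) hK'.le
  have hh_cont : Continuous h := by
    apply Continuous.mul continuous_const
    exact (Real.continuous_exp.comp (((continuous_id.max continuous_const).neg).div_const c))
  have hh_int : IntegrableOn h (Ioi 0) := by
    apply Integrable.mono' (hexp_int.const_mul K') hh_cont.aestronglyMeasurable
    filter_upwards [ae_restrict_mem measurableSet_Ioi] with t ht
    rw [Real.norm_eq_abs, abs_of_nonneg (by positivity)]
    exact hbound t ht
  have hg_int : IntegrableOn g (Ioi 0) := by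
    apply Integrable.mono' hh_int (hgant.measurable.aestronglyMeasurable)
    filter_upwards [ae_restrict_mem measurableSet_Ioi] with t ht
    rw [Real.norm_eq_abs, abs_of_nonneg (hgnn t)]
    exact hgh t ht
  -- layer cake
  have hlc : ∫ ω, f ω ∂P = ∫ t in Ioi 0, g t := by
    exact hint.integral_eq_integral_meas_lt (Filter.Eventually.of_forall hfnn)
  -- compute ∫ h
  have hsplit : (Ioc (0:ℝ) a) ∪ (Ioi a) = Ioi 0 := Ioc_union_Ioi_eq_Ioi ha0.le
  have hexpa : Real.exp (-a / c) = (n : ℝ)⁻¹ := by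
    rw [ha, neg_div, mul_div_cancel_left₀ _ hc0.ne', Real.exp_neg, Real.exp_log hn0]
  have h1 : ∫ t in Ioc 0 a, h t = a * (K' * (n:ℝ)⁻¹) := by
    rw [setIntegral_congr_fun measurableSet_Ioc
      (g := fun _ : ℝ => K' * (n:ℝ)⁻¹) (fun t ht => by
        rw [hh]; simp only; rw [max_eq_right ht.2, hexpa])]
    rw [setIntegral_const]
    simp [Real.volume_Ioc, ENNReal.toReal_ofReal ha0.le, smul_eq_mul, ha0.le]
  have h2 : ∫ t in Ioi a, h t = K' * (c * (n:ℝ)⁻¹) := by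
    rw [setIntegral_congr_fun measurableSet_Ioi
      (g := fun t : ℝ => K' * Real.exp (-(c⁻¹ * t))) (fun t ht => by
        rw [hh]; simp only
        rw [max_eq_left (le_of_lt ht), neg_div, inv_mul_eq_div])]
    rw [integral_const_mul]
    rw [integral_comp_mul_left_Ioi (fun x => Real.exp (-x)) a (inv_pos.2 hc0)]
    rw [integral_exp_neg_Ioi, inv_inv, smul_eq_mul]
    congr 1
    rw [← hexpa]
    congr 1
    rw [neg_div, inv_mul_eq_div]
  have h3 : ∫ t in Ioi 0, h t = a * (K' * (n:ℝ)⁻¹) + K' * (c * (n:ℝ)⁻¹) := by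
    rw [← hsplit, setIntegral_union (Ioc_disjoint_Ioi le_rfl) measurableSet_Ioi
      (hh_int.mono_set (by rw [← hsplit]; exact subset_union_left))
      (hh_int.mono_set (by rw [← hsplit]; exact subset_union_right)), h1, h2]
  calc ∫ ω, f ω ∂P = ∫ t in Ioi 0, g t := hlc
    _ ≤ ∫ t in Ioi 0, h t := setIntegral_mono_on hg_int hh_int measurableSet_Ioi hgh
    _ = a * (K' * (n:ℝ)⁻¹) + K' * (c * (n:ℝ)⁻¹) := h3
    _ = K' * β' * s ^ 2 * (1 + Real.log n) / n := by
        rw [ha, hc]; field_simp; ring
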